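/- There exists an integer n₀ such that for all n ≥ n₀ the following holds: if F and G are nonempty families of subsets of [n] = {1,...,n} forming a cross-Sperner pair, then |F| + |G| ≤ 2^n − 2^⌈n/2⌉ − 2^⌊n/2⌋ + 2. -/

import Mathlib

/-- A pair of families `(𝓕, 𝓖)` is cross-Sperner if there is no pair
`F ∈ 𝓕`, `G ∈ 𝓖` with `F ⊆ G` or `G ⊆ F`. -/
def CrossSperner (𝓕 𝓖 : Finset (Finset ℕ)) : Prop :=
  ∀ F ∈ 𝓕, ∀ G ∈ 𝓖, ¬ F ⊆ G ∧ ¬ G ⊆ F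

open Finset

lemma two_pow_convex_aux {n x : ℕ} (hx : x ≤ n / 2) :
    2 ^ ((n + 1) / 2) + 2 ^ (n / 2) ≤ 2 ^ x + 2 ^ (n - x) := by
  have h1 : (n + 1) / 2 = n - n / 2 := by omega
  have k1 : (2:ℕ) ^ (n / 2) = 2 ^ x * 2 ^ (n / 2 - x) := by
    rw [← pow_add]; congr 1; omega
  have k2 : (2:ℕ) ^ (n - x) = 2 ^ (n - n / 2) * 2 ^ (n / 2 - x) := by
    rw [← pow_add]; congr 1; omega
  have k3 : (2:ℕ) ^ x ≤ 2 ^ (n - n / 2) := Nat.pow_le_pow_right (by norm_num) (by omega)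
  have k4 : (1:ℕ) ≤ 2 ^ (n / 2 - x) := Nat.one_le_two_pow
  rw [h1, k1, k2]
  obtain ⟨d, hd⟩ := Nat.le.dest k3
  obtain ⟨e, he⟩ := Nat.le.dest k4
  rw [← hd, ← he]
  nlinarith [Nat.zero_le (d * e)]

lemma two_pow_convex {n x : ℕ} (hx : x ≤ n) :
    2 ^ ((n + 1) / 2) + 2 ^ (n / 2) ≤ 2 ^ x + 2 ^ (n - x) := by
  rcases le_or_gt x (n / 2) with h | h
  · exact two_pow_convex_aux h
  · have h2 : n - x ≤ n / 2 := by omega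
    have h3 := two_pow_convex_aux (n := n) h2
    rwa [Nat.sub_sub_self hx, Nat.add_comm (2 ^ (n - x))] at h3

lemma arithA {n : ℕ} (hn : 2 ≤ n) :
    2 ^ ((n + 1 + 1) / 2) + 2 ^ ((n + 1) / 2) + 2 ≤ 2 * 2 ^ ((n + 1) / 2) + 2 * 2 ^ (n / 2) := by
  rcases Nat.even_or_odd n with ⟨k, hk⟩ | ⟨k, hk⟩
  · have hk1 : 1 ≤ k := by omega
    have e1 : (n + 1 + 1) / 2 = k + 1 := by omega
    have e2 : (n + 1) / 2 = k := by omega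
    have e3 : n / 2 = k := by omega
    rw [e1, e2, e3, pow_succ]
    have h2 : (2:ℕ) ≤ 2 ^ k := by
      calc (2:ℕ) = 2 ^ 1 := rfl
      _ ≤ 2 ^ k := Nat.pow_le_pow_right (by norm_num) hk1
    linarith
  · have hk1 : 1 ≤ k := by omega
    have e1 : (n + 1 + 1) / 2 = k + 1 := by omega
    have e2 : (n + 1) / 2 = k + 1 := by omega
    have e3 : n / 2 = k := by omega
    rw [e1, e2, e3, pow_succ]
    have h2 : (2:ℕ) ≤ 2 ^ k := by
      calc (2:ℕ) = 2 ^ 1 := rfl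
      _ ≤ 2 ^ k := Nat.pow_le_pow_right (by norm_num) hk1
    linarith

lemma card_three {α : Type*} [DecidableEq α] {A B C U : Finset α}
    (hA : A ⊆ U) (hB : B ⊆ U) (hC : C ⊆ U)
    (dAB : Disjoint A B) (dAC : Disjoint A C) (dBC : Disjoint B C) :
    A.card + B.card + C.card ≤ U.card := by
  have h1 : (A ∪ B ∪ C).card = A.card + B.card + C.card := by
    rw [Finset.card_union_of_disjoint (by rw [Finset.disjoint_union_left]; exact ⟨dAC, dBC⟩),
        Finset.card_union_of_disjoint dAB]
  rw [← h1]
  exact Finset.card_le_card (Finset.union_subset (Finset.union_subset hA hB) hC)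

lemma caseInsert {n : ℕ} (hn : 1 ≤ n) {𝓕 𝓖 : Finset (Finset ℕ)}
    (hF : 𝓕 ⊆ (Finset.Icc 1 n).powerset) (hG : 𝓖 ⊆ (Finset.Icc 1 n).powerset)
    (hFne : 𝓕.Nonempty) (hCS : CrossSperner 𝓕 𝓖)
    (hall : ∀ A ∈ 𝓕, n ∈ A) :
    𝓕.card + 𝓖.card + 2 ^ ((n + 1) / 2) + 2 ^ (n / 2) ≤ 2 ^ n + 2 := by
  set m := n - 1 with hmdef
  set X' : Finset ℕ := Finset.Icc 1 m with hX'
  have hX'card : X'.card = m := by rw [hX', Nat.card_Icc]; omega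
  have hsubX' : ∀ {A : Finset ℕ}, A ⊆ Finset.Icc 1 n → n ∉ A → A ⊆ X' := by
    intro A hA hnA x hx
    have h1 := hA hx
    rw [Finset.mem_Icc] at h1
    rw [hX', Finset.mem_Icc]
    rcases Nat.lt_or_ge x n with h2 | h2
    · omega
    · exfalso
      have hxn : x = n := by omega
      exact hnA (hxn ▸ hx)
  -- decompositions
  set F₁ : Finset (Finset ℕ) := 𝓕.image (fun A => A.erase n) with hF₁def
  have hcardF1 : F₁.card = 𝓕.card := by
    rw [hF₁def]
    apply Finset.card_image_of_injOn
    intro A hA B hB hAB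
    have hAB' : A.erase n = B.erase n := hAB
    have h2 : insert n (A.erase n) = insert n (B.erase n) := by rw [hAB']
    rwa [Finset.insert_erase (hall A (Finset.mem_coe.mp hA)),
      Finset.insert_erase (hall B (Finset.mem_coe.mp hB))] at h2
  have memF1 : ∀ S ∈ F₁, insert n S ∈ 𝓕 ∧ n ∉ S ∧ S ⊆ X' := by
    intro S hS
    rw [hF₁def, Finset.mem_image] at hS
    obtain ⟨A, hA, rfl⟩ := hS
    refine ⟨?_, Finset.notMem_erase n A, ?_⟩
    · rw [Finset.insert_erase (hall A hA)]; exact hA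
    · exact hsubX' ((Finset.erase_subset n A).trans (Finset.mem_powerset.mp (hF hA)))
        (Finset.notMem_erase n A)
  set G₀ : Finset (Finset ℕ) := 𝓖.filter (fun S => n ∉ S) with hG₀def
  set Gfil : Finset (Finset ℕ) := 𝓖.filter (fun S => n ∈ S) with hGfildef
  set G₁ : Finset (Finset ℕ) := Gfil.image (fun A => A.erase n) with hG₁def
  have hcardG : G₀.card + G₁.card = 𝓖.card := by
    have h1 : G₁.card = Gfil.card := by
      rw [hG₁def]
      apply Finset.card_image_of_injOn
      intro A hA B hB hAB
      have hA2 : n ∈ A := (Finset.mem_filter.mp (Finset.mem_coe.mp hA)).2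
      have hB2 : n ∈ B := (Finset.mem_filter.mp (Finset.mem_coe.mp hB)).2
      have hAB' : A.erase n = B.erase n := hAB
      have h2 : insert n (A.erase n) = insert n (B.erase n) := by rw [hAB']
      rwa [Finset.insert_erase hA2, Finset.insert_erase hB2] at h2
    have h2 := Finset.card_filter_add_card_filter_not (s := 𝓖) (fun S => n ∈ S)
    rw [h1, hGfildef, hG₀def]
    omega
  have memG0 : ∀ S ∈ G₀, S ∈ 𝓖 ∧ n ∉ S ∧ S ⊆ X' := by
    intro S hS
    rw [hG₀def, Finset.mem_filter] at hS
    exact ⟨hS.1, hS.2, hsubX' (Finset.mem_powerset.mp (hG hS.1)) hS.2⟩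
  have memG1 : ∀ S ∈ G₁, insert n S ∈ 𝓖 ∧ n ∉ S ∧ S ⊆ X' := by
    intro S hS
    rw [hG₁def, Finset.mem_image] at hS
    obtain ⟨A, hA, rfl⟩ := hS
    rw [hGfildef, Finset.mem_filter] at hA
    refine ⟨?_, Finset.notMem_erase n A, ?_⟩
    · rw [Finset.insert_erase hA.2]; exact hA.1
    · exact hsubX' ((Finset.erase_subset n A).trans (Finset.mem_powerset.mp (hG hA.1)))
        (Finset.notMem_erase n A)
  -- minimal member
  obtain ⟨Fs, hFsmem, hFsmin⟩ := Finset.exists_min_image F₁ Finset.card (hFne.image _)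
  obtain ⟨hFs𝓕, hFsn, hFsX'⟩ := memF1 Fs hFsmem
  set f := Fs.card with hfdef
  have hfm : f ≤ m := hX'card ▸ Finset.card_le_card hFsX'
  -- families E (proper subsets of Fs) and UP (supersets of Fs in X')
  set E : Finset (Finset ℕ) := Fs.powerset.erase Fs with hEdef
  have hEcard : E.card + 1 = 2 ^ f := by
    rw [hEdef, Finset.card_erase_of_mem (Finset.mem_powerset_self Fs), Finset.card_powerset,
      ← hfdef]
    have := Nat.one_le_two_pow (n := f)
    omega
  set UP : Finset (Finset ℕ) := ((X' \ Fs).powerset).image (fun T => Fs ∪ T) with hUPdef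
  have hUPcard : UP.card = 2 ^ (m - f) := by
    rw [hUPdef]
    rw [Finset.card_image_of_injOn, Finset.card_powerset, Finset.card_sdiff_of_subset hFsX', hX'card]
    intro T1 h1 T2 h2 hT
    simp only [Finset.coe_powerset, Set.mem_preimage, Set.mem_powerset_iff] at h1 h2
    have d1 : Disjoint Fs T1 := (Finset.sdiff_disjoint.mono_left (by exact_mod_cast h1)).symm
    have d2 : Disjoint Fs T2 := (Finset.sdiff_disjoint.mono_left (by exact_mod_cast h2)).symm
    have hT' : Fs ∪ T1 = Fs ∪ T2 := hT
    calc T1 = (Fs ∪ T1) \ Fs := (Finset.union_sdiff_cancel_left d1).symm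
    _ = (Fs ∪ T2) \ Fs := by rw [hT']
    _ = T2 := Finset.union_sdiff_cancel_left d2
  have memUP : ∀ S ∈ UP, Fs ⊆ S ∧ S ⊆ X' := by
    intro S hS
    rw [hUPdef, Finset.mem_image] at hS
    obtain ⟨T, hT, rfl⟩ := hS
    exact ⟨Finset.subset_union_left, Finset.union_subset hFsX'
      ((Finset.mem_powerset.mp hT).trans (Finset.sdiff_subset))⟩
  have hFsUP : Fs ∈ UP := by
    rw [hUPdef, Finset.mem_image]
    exact ⟨∅, Finset.empty_mem_powerset _, Finset.union_empty Fs⟩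
  set UP' : Finset (Finset ℕ) := UP.erase Fs with hUP'def
  have hUP'card : UP'.card + 1 = 2 ^ (m - f) := by
    rw [hUP'def, Finset.card_erase_of_mem hFsUP, hUPcard]
    have := Nat.one_le_two_pow (n := m - f)
    omega
  -- inequality I
  have hI : F₁.card + (G₀ ∪ G₁).card + E.card ≤ 2 ^ m := by
    have := card_three (A := F₁) (B := G₀ ∪ G₁) (C := E) (U := X'.powerset)
      (by intro S hS; exact Finset.mem_powerset.mpr (memF1 S hS).2.2)
      (by intro S hS
          rcases Finset.mem_union.mp hS with h | h
          · exact Finset.mem_powerset.mpr (memG0 S h).2.2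
          · exact Finset.mem_powerset.mpr (memG1 S h).2.2)
      (by intro S hS
          rw [hEdef, Finset.mem_erase] at hS
          exact Finset.mem_powerset.mpr ((Finset.mem_powerset.mp hS.2).trans hFsX'))
      (by rw [Finset.disjoint_left]
          intro S hS hS'
          obtain ⟨h𝓕, -, -⟩ := memF1 S hS
          rcases Finset.mem_union.mp hS' with h | h
          · exact (hCS _ h𝓕 S (memG0 S h).1).2 (Finset.subset_insert n S)
          · exact (hCS _ h𝓕 _ (memG1 S h).1).1 (subset_refl _)
      )
      (by rw [Finset.disjoint_left]
          intro S hS hS'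
          rw [hEdef, Finset.mem_erase] at hS'
          have hlt : S.card < f := Finset.card_lt_card ⟨Finset.mem_powerset.mp hS'.2, fun h =>
            hS'.1 (Finset.Subset.antisymm (Finset.mem_powerset.mp hS'.2) h)⟩
          exact absurd (hFsmin S hS) (by omega))
      (by rw [Finset.disjoint_left]
          intro S hS hS'
          rw [hEdef, Finset.mem_erase] at hS'
          have hsub : S ⊆ Fs := Finset.mem_powerset.mp hS'.2
          rcases Finset.mem_union.mp hS with h | h
          · exact (hCS _ hFs𝓕 S (memG0 S h).1).2 (hsub.trans (Finset.subset_insert n Fs))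
          · exact (hCS _ hFs𝓕 _ (memG1 S h).1).2 (Finset.insert_subset_insert n hsub))
    calc F₁.card + (G₀ ∪ G₁).card + E.card ≤ X'.powerset.card := this
    _ = 2 ^ m := by rw [Finset.card_powerset, hX'card]
  have hPcard : Fs.powerset.card = 2 ^ f := by
    rw [Finset.card_powerset, ← hfdef]
  -- inequality II
  have hII : (G₀ ∩ G₁).card + 2 ^ f + UP'.card ≤ 2 ^ m := by
    have := card_three (A := G₀ ∩ G₁) (B := Fs.powerset) (C := UP') (U := X'.powerset)
      (by intro S hS
          exact Finset.mem_powerset.mpr (memG0 S (Finset.mem_of_mem_inter_left hS)).2.2)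
      (by intro S hS
          exact Finset.mem_powerset.mpr ((Finset.mem_powerset.mp hS).trans hFsX'))
      (by intro S hS
          rw [hUP'def, Finset.mem_erase] at hS
          exact Finset.mem_powerset.mpr (memUP S hS.2).2)
      (by rw [Finset.disjoint_left]
          intro S hS hS'
          have h0 := memG0 S (Finset.mem_of_mem_inter_left hS)
          exact (hCS _ hFs𝓕 S h0.1).2 ((Finset.mem_powerset.mp hS').trans (Finset.subset_insert n Fs)))
      (by rw [Finset.disjoint_left]
          intro S hS hS'
          rw [hUP'def, Finset.mem_erase] at hS'
          have h1 := memG1 S (Finset.mem_of_mem_inter_right hS)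
          exact (hCS _ hFs𝓕 _ h1.1).1 (Finset.insert_subset_insert n (memUP S hS'.2).1))
      (by rw [Finset.disjoint_left]
          intro S hS hS'
          rw [hUP'def, Finset.mem_erase] at hS'
          exact hS'.1 (Finset.Subset.antisymm (memUP S hS'.2).1 (Finset.mem_powerset.mp hS)).symm)
    calc (G₀ ∩ G₁).card + 2 ^ f + UP'.card
        = (G₀ ∩ G₁).card + Fs.powerset.card + UP'.card := by rw [hPcard]
    _ ≤ X'.powerset.card := this
    _ = 2 ^ m := by rw [Finset.card_powerset, hX'card]
  -- final arithmetic
  have hGunion : (G₀ ∪ G₁).card + (G₀ ∩ G₁).card = G₀.card + G₁.card :=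
    Finset.card_union_add_card_inter _ _
  have hconv := two_pow_convex (n := n) (x := f + 1) (by omega)
  have hnf : n - (f + 1) = m - f := by omega
  rw [hnf] at hconv
  have hp1 : (2:ℕ) ^ (f + 1) = 2 * 2 ^ f := by rw [pow_succ]; ring
  have hpn : (2:ℕ) ^ n = 2 * 2 ^ m := by
    have hnm : n = m + 1 := by omega
    rw [hnm, pow_succ]; ring
  rw [hp1] at hconv
  omega

lemma caseAvoid {n : ℕ} (hn : 1 ≤ n) {𝓕 𝓖 : Finset (Finset ℕ)}
    (hF : 𝓕 ⊆ (Finset.Icc 1 n).powerset) (hG : 𝓖 ⊆ (Finset.Icc 1 n).powerset)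
    (hFne : 𝓕.Nonempty) (hCS : CrossSperner 𝓕 𝓖)
    (hall : ∀ A ∈ 𝓕, n ∉ A) :
    𝓕.card + 𝓖.card + 2 ^ ((n + 1) / 2) + 2 ^ (n / 2) ≤ 2 ^ n + 2 := by
  set m := n - 1 with hmdef
  set X' : Finset ℕ := Finset.Icc 1 m with hX'
  have hX'card : X'.card = m := by rw [hX', Nat.card_Icc]; omega
  have hsubX' : ∀ {A : Finset ℕ}, A ⊆ Finset.Icc 1 n → n ∉ A → A ⊆ X' := by
    intro A hA hnA x hx
    have h1 := hA hx
    rw [Finset.mem_Icc] at h1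
    rw [hX', Finset.mem_Icc]
    rcases Nat.lt_or_ge x n with h2 | h2
    · omega
    · exfalso
      have hxn : x = n := by omega
      exact hnA (hxn ▸ hx)
  have hFX' : ∀ A ∈ 𝓕, A ⊆ X' := fun A hA =>
    hsubX' (Finset.mem_powerset.mp (hF hA)) (hall A hA)
  set G₀ : Finset (Finset ℕ) := 𝓖.filter (fun S => n ∉ S) with hG₀def
  set Gfil : Finset (Finset ℕ) := 𝓖.filter (fun S => n ∈ S) with hGfildef
  set G₁ : Finset (Finset ℕ) := Gfil.image (fun A => A.erase n) with hG₁def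
  have hcardG : G₀.card + G₁.card = 𝓖.card := by
    have h1 : G₁.card = Gfil.card := by
      rw [hG₁def]
      apply Finset.card_image_of_injOn
      intro A hA B hB hAB
      have hA2 : n ∈ A := (Finset.mem_filter.mp (Finset.mem_coe.mp hA)).2
      have hB2 : n ∈ B := (Finset.mem_filter.mp (Finset.mem_coe.mp hB)).2
      have hAB' : A.erase n = B.erase n := hAB
      have h2 : insert n (A.erase n) = insert n (B.erase n) := by rw [hAB']
      rwa [Finset.insert_erase hA2, Finset.insert_erase hB2] at h2
    have h2 := Finset.card_filter_add_card_filter_not (s := 𝓖) (fun S => n ∈ S)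
    rw [h1, hGfildef, hG₀def]
    omega
  have memG0 : ∀ S ∈ G₀, S ∈ 𝓖 ∧ n ∉ S ∧ S ⊆ X' := by
    intro S hS
    rw [hG₀def, Finset.mem_filter] at hS
    exact ⟨hS.1, hS.2, hsubX' (Finset.mem_powerset.mp (hG hS.1)) hS.2⟩
  have memG1 : ∀ S ∈ G₁, insert n S ∈ 𝓖 ∧ n ∉ S ∧ S ⊆ X' := by
    intro S hS
    rw [hG₁def, Finset.mem_image] at hS
    obtain ⟨A, hA, rfl⟩ := hS
    rw [hGfildef, Finset.mem_filter] at hA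
    refine ⟨?_, Finset.notMem_erase n A, ?_⟩
    · rw [Finset.insert_erase hA.2]; exact hA.1
    · exact hsubX' ((Finset.erase_subset n A).trans (Finset.mem_powerset.mp (hG hA.1)))
        (Finset.notMem_erase n A)
  -- maximal member
  obtain ⟨Fs, hFsmem, hFsmax⟩ := Finset.exists_max_image 𝓕 Finset.card hFne
  have hFsX' : Fs ⊆ X' := hFX' Fs hFsmem
  set f := Fs.card with hfdef
  have hfm : f ≤ m := hX'card ▸ Finset.card_le_card hFsX'
  set UP : Finset (Finset ℕ) := ((X' \ Fs).powerset).image (fun T => Fs ∪ T) with hUPdef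
  have hUPcard : UP.card = 2 ^ (m - f) := by
    rw [hUPdef]
    rw [Finset.card_image_of_injOn, Finset.card_powerset, Finset.card_sdiff_of_subset hFsX', hX'card]
    intro T1 h1 T2 h2 hT
    simp only [Finset.coe_powerset, Set.mem_preimage, Set.mem_powerset_iff] at h1 h2
    have d1 : Disjoint Fs T1 := (Finset.sdiff_disjoint.mono_left (by exact_mod_cast h1)).symm
    have d2 : Disjoint Fs T2 := (Finset.sdiff_disjoint.mono_left (by exact_mod_cast h2)).symm
    have hT' : Fs ∪ T1 = Fs ∪ T2 := hT
    calc T1 = (Fs ∪ T1) \ Fs := (Finset.union_sdiff_cancel_left d1).symm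
    _ = (Fs ∪ T2) \ Fs := by rw [hT']
    _ = T2 := Finset.union_sdiff_cancel_left d2
  have memUP : ∀ S ∈ UP, Fs ⊆ S ∧ S ⊆ X' := by
    intro S hS
    rw [hUPdef, Finset.mem_image] at hS
    obtain ⟨T, hT, rfl⟩ := hS
    exact ⟨Finset.subset_union_left, Finset.union_subset hFsX'
      ((Finset.mem_powerset.mp hT).trans (Finset.sdiff_subset))⟩
  have hFsUP : Fs ∈ UP := by
    rw [hUPdef, Finset.mem_image]
    exact ⟨∅, Finset.empty_mem_powerset _, Finset.union_empty Fs⟩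
  set E' : Finset (Finset ℕ) := UP.erase Fs with hE'def
  have hE'card : E'.card + 1 = 2 ^ (m - f) := by
    rw [hE'def, Finset.card_erase_of_mem hFsUP, hUPcard]
    have := Nat.one_le_two_pow (n := m - f)
    omega
  set P' : Finset (Finset ℕ) := Fs.powerset.erase Fs with hP'def
  have hP'card : P'.card + 1 = 2 ^ f := by
    rw [hP'def, Finset.card_erase_of_mem (Finset.mem_powerset_self Fs), Finset.card_powerset,
      ← hfdef]
    have := Nat.one_le_two_pow (n := f)
    omega
  -- inequality I
  have hI : 𝓕.card + (G₀ ∪ G₁).card + E'.card ≤ 2 ^ m := by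
    have := card_three (A := 𝓕) (B := G₀ ∪ G₁) (C := E') (U := X'.powerset)
      (fun S hS => Finset.mem_powerset.mpr (hFX' S hS))
      (by intro S hS
          rcases Finset.mem_union.mp hS with h | h
          · exact Finset.mem_powerset.mpr (memG0 S h).2.2
          · exact Finset.mem_powerset.mpr (memG1 S h).2.2)
      (by intro S hS
          rw [hE'def, Finset.mem_erase] at hS
          exact Finset.mem_powerset.mpr (memUP S hS.2).2)
      (by rw [Finset.disjoint_left]
          intro S hS hS'
          rcases Finset.mem_union.mp hS' with h | h
          · exact (hCS S hS S (memG0 S h).1).1 (subset_refl S)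
          · exact (hCS S hS _ (memG1 S h).1).1 (Finset.subset_insert n S))
      (by rw [Finset.disjoint_left]
          intro S hS hS'
          rw [hE'def, Finset.mem_erase] at hS'
          have hlt : f < S.card :=
            Finset.card_lt_card ⟨(memUP S hS'.2).1, fun h =>
              hS'.1 (Finset.Subset.antisymm h (memUP S hS'.2).1)⟩
          exact absurd (hFsmax S hS) (by omega))
      (by rw [Finset.disjoint_left]
          intro S hS hS'
          rw [hE'def, Finset.mem_erase] at hS'
          have hsub : Fs ⊆ S := (memUP S hS'.2).1
          rcases Finset.mem_union.mp hS with h | h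
          · exact (hCS Fs hFsmem S (memG0 S h).1).1 hsub
          · exact (hCS Fs hFsmem _ (memG1 S h).1).1 (hsub.trans (Finset.subset_insert n S)))
    calc 𝓕.card + (G₀ ∪ G₁).card + E'.card ≤ X'.powerset.card := this
    _ = 2 ^ m := by rw [Finset.card_powerset, hX'card]
  -- inequality II
  have hII : (G₀ ∩ G₁).card + P'.card + UP.card ≤ 2 ^ m := by
    have := card_three (A := G₀ ∩ G₁) (B := P') (C := UP) (U := X'.powerset)
      (by intro S hS
          exact Finset.mem_powerset.mpr (memG0 S (Finset.mem_of_mem_inter_left hS)).2.2)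
      (by intro S hS
          rw [hP'def, Finset.mem_erase] at hS
          exact Finset.mem_powerset.mpr ((Finset.mem_powerset.mp hS.2).trans hFsX'))
      (fun S hS => Finset.mem_powerset.mpr (memUP S hS).2)
      (by rw [Finset.disjoint_left]
          intro S hS hS'
          rw [hP'def, Finset.mem_erase] at hS'
          have h0 := memG0 S (Finset.mem_of_mem_inter_left hS)
          exact (hCS Fs hFsmem S h0.1).2 (Finset.mem_powerset.mp hS'.2))
      (by rw [Finset.disjoint_left]
          intro S hS hS'
          have h0 := memG0 S (Finset.mem_of_mem_inter_left hS)
          exact (hCS Fs hFsmem S h0.1).1 (memUP S hS').1)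
      (by rw [Finset.disjoint_left]
          intro S hS hS'
          rw [hP'def, Finset.mem_erase] at hS
          exact hS.1 (Finset.Subset.antisymm (Finset.mem_powerset.mp hS.2) (memUP S hS').1))
    calc (G₀ ∩ G₁).card + P'.card + UP.card ≤ X'.powerset.card := this
    _ = 2 ^ m := by rw [Finset.card_powerset, hX'card]
  -- final arithmetic
  have hGunion : (G₀ ∪ G₁).card + (G₀ ∩ G₁).card = G₀.card + G₁.card :=
    Finset.card_union_add_card_inter _ _
  have hconv := two_pow_convex (n := n) (x := f) (by omega)
  have hnf : n - f = (m - f) + 1 := by omega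
  rw [hnf] at hconv
  have hp1 : (2:ℕ) ^ ((m - f) + 1) = 2 * 2 ^ (m - f) := by rw [pow_succ]; ring
  have hpn : (2:ℕ) ^ n = 2 * 2 ^ m := by
    have hnm : n = m + 1 := by omega
    rw [hnm, pow_succ]; ring
  rw [hp1] at hconv
  omega

lemma base2 {𝓕 𝓖 : Finset (Finset ℕ)}
    (hF : 𝓕 ⊆ (Finset.Icc 1 2).powerset) (hG : 𝓖 ⊆ (Finset.Icc 1 2).powerset)
    (hFne : 𝓕.Nonempty) (hGne : 𝓖.Nonempty) (hCS : CrossSperner 𝓕 𝓖) :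
    𝓕.card + 𝓖.card ≤ 2 := by
  have hIcc : Finset.Icc 1 2 = ({1, 2} : Finset ℕ) := by
    ext x
    simp only [Finset.mem_Icc, Finset.mem_insert, Finset.mem_singleton]
    omega
  obtain ⟨G0, hG0⟩ := hGne
  obtain ⟨F0, hF0⟩ := hFne
  have key : ∀ (𝓐 𝓑 : Finset (Finset ℕ)), 𝓐 ⊆ (Finset.Icc 1 2).powerset →
      𝓑 ⊆ (Finset.Icc 1 2).powerset → CrossSperner 𝓐 𝓑 → ∀ B0 ∈ 𝓑,
      ∀ A ∈ 𝓐, A = {1} ∨ A = {2} := by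
    intro 𝓐 𝓑 hA hB hCS' B0 hB0 A hAmem
    have hAsub : A ⊆ ({1, 2} : Finset ℕ) := by
      rw [← hIcc]; exact Finset.mem_powerset.mp (hA hAmem)
    have h1 : ¬ A ⊆ B0 := (hCS' A hAmem B0 hB0).1
    have h2 : ¬ B0 ⊆ A := (hCS' A hAmem B0 hB0).2
    have hAne : A ≠ ∅ := by rintro rfl; exact h1 (Finset.empty_subset _)
    have hAnefull : A ≠ ({1, 2} : Finset ℕ) := by
      rintro rfl
      exact h2 (by rw [← hIcc]; exact Finset.mem_powerset.mp (hB hB0))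
    by_cases h1A : 1 ∈ A <;> by_cases h2A : 2 ∈ A
    · exfalso
      apply hAnefull
      apply Finset.Subset.antisymm hAsub
      intro x hx
      simp only [Finset.mem_insert, Finset.mem_singleton] at hx
      rcases hx with rfl | rfl
      · exact h1A
      · exact h2A
    · left
      apply Finset.Subset.antisymm
      · intro x hx
        have := hAsub hx
        simp only [Finset.mem_insert, Finset.mem_singleton] at this ⊢
        rcases this with rfl | rfl
        · rfl
        · exact absurd hx h2A
      · simp only [Finset.singleton_subset_iff]; exact h1A
    · right
      apply Finset.Subset.antisymm
      · intro x hx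
        have := hAsub hx
        simp only [Finset.mem_insert, Finset.mem_singleton] at this ⊢
        rcases this with rfl | rfl
        · exact absurd hx h1A
        · rfl
      · simp only [Finset.singleton_subset_iff]; exact h2A
    · exfalso
      apply hAne
      ext x
      simp only [Finset.notMem_empty, iff_false]
      intro hx
      have := hAsub hx
      simp only [Finset.mem_insert, Finset.mem_singleton] at this
      rcases this with rfl | rfl
      · exact h1A hx
      · exact h2A hx
  have hCS' : CrossSperner 𝓖 𝓕 := fun Gm hGm Fm hFm =>
    ⟨(hCS Fm hFm Gm hGm).2, (hCS Fm hFm Gm hGm).1⟩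
  have keyF := key 𝓕 𝓖 hF hG hCS G0 hG0
  have keyG := key 𝓖 𝓕 hG hF hCS' F0 hF0
  have hsub : 𝓕 ∪ 𝓖 ⊆ ({{1}, {2}} : Finset (Finset ℕ)) := by
    intro S hS
    simp only [Finset.mem_insert, Finset.mem_singleton]
    rcases Finset.mem_union.mp hS with h | h
    · exact keyF S h
    · exact keyG S h
  have hdisj : 𝓕 ∩ 𝓖 = ∅ := by
    rw [Finset.eq_empty_iff_forall_notMem]
    intro S hS
    exact (hCS S (Finset.mem_of_mem_inter_left hS) S (Finset.mem_of_mem_inter_right hS)).1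
      (subset_refl S)
  have h1 : 𝓕.card + 𝓖.card = (𝓕 ∪ 𝓖).card + (𝓕 ∩ 𝓖).card :=
    (Finset.card_union_add_card_inter _ _).symm
  have h2 : (𝓕 ∪ 𝓖).card ≤ ({{1}, {2}} : Finset (Finset ℕ)).card := Finset.card_le_card hsub
  have h3 : ({{1}, {2}} : Finset (Finset ℕ)).card ≤ 2 := Finset.card_insert_le _ _ |>.trans (by simp)
  rw [hdisj] at h1
  simp only [Finset.card_empty, add_zero] at h1
  omega

lemma mainQ (n : ℕ) (hn : 2 ≤ n) :
    ∀ 𝓕 𝓖 : Finset (Finset ℕ),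
      𝓕 ⊆ (Finset.Icc 1 n).powerset → 𝓖 ⊆ (Finset.Icc 1 n).powerset →
      𝓕.Nonempty → 𝓖.Nonempty → CrossSperner 𝓕 𝓖 →
      𝓕.card + 𝓖.card + 2 ^ ((n + 1) / 2) + 2 ^ (n / 2) ≤ 2 ^ n + 2 := by
  induction n, hn using Nat.le_induction with
  | base =>
    intro 𝓕 𝓖 hF hG hFne hGne hCS
    have := base2 hF hG hFne hGne hCS
    norm_num
    omega
  | succ n hn ih =>
    intro 𝓕 𝓖 hF hG hFne hGne hCS
    set N := n + 1 with hNdef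
    have hCSsym : CrossSperner 𝓖 𝓕 := fun Gm hGm Fm hFm =>
      ⟨(hCS Fm hFm Gm hGm).2, (hCS Fm hFm Gm hGm).1⟩
    by_cases hc1 : ∀ A ∈ 𝓕, N ∈ A
    · exact caseInsert (by omega) hF hG hFne hCS hc1
    by_cases hc2 : ∀ A ∈ 𝓕, N ∉ A
    · exact caseAvoid (by omega) hF hG hFne hCS hc2
    by_cases hc3 : ∀ A ∈ 𝓖, N ∈ A
    · have := caseInsert (by omega) hG hF hGne hCSsym hc3
      omega
    by_cases hc4 : ∀ A ∈ 𝓖, N ∉ A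
    · have := caseAvoid (by omega) hG hF hGne hCSsym hc4
      omega
    -- all four parts nonempty
    push_neg at hc1 hc2 hc3 hc4
    obtain ⟨A1, hA1mem, hA1⟩ := hc1
    obtain ⟨A2, hA2mem, hA2⟩ := hc2
    obtain ⟨B1, hB1mem, hB1⟩ := hc3
    obtain ⟨B2, hB2mem, hB2⟩ := hc4
    -- decompositions
    have hsubN : ∀ {A : Finset ℕ}, A ⊆ Finset.Icc 1 N → N ∉ A → A ⊆ Finset.Icc 1 n := by
      intro A hA hnA x hx
      have h1 := hA hx
      rw [Finset.mem_Icc] at h1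
      rw [Finset.mem_Icc]
      rcases Nat.lt_or_ge x N with h2 | h2
      · omega
      · exfalso
        have hxn : x = N := by omega
        exact hnA (hxn ▸ hx)
    have hsubN' : ∀ {A : Finset ℕ}, A ⊆ Finset.Icc 1 N → A.erase N ⊆ Finset.Icc 1 n := by
      intro A hA
      exact hsubN ((Finset.erase_subset N A).trans hA) (Finset.notMem_erase N A)
    set F₀ : Finset (Finset ℕ) := 𝓕.filter (fun S => N ∉ S) with hF₀def
    set Ffil : Finset (Finset ℕ) := 𝓕.filter (fun S => N ∈ S) with hFfildef
    set F₁ : Finset (Finset ℕ) := Ffil.image (fun A => A.erase N) with hF₁def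
    set G₀ : Finset (Finset ℕ) := 𝓖.filter (fun S => N ∉ S) with hG₀def
    set Gfil : Finset (Finset ℕ) := 𝓖.filter (fun S => N ∈ S) with hGfildef
    set G₁ : Finset (Finset ℕ) := Gfil.image (fun A => A.erase N) with hG₁def
    have himgcard : ∀ (𝓗 : Finset (Finset ℕ)),
        ((𝓗.filter (fun S => N ∈ S)).image (fun A => A.erase N)).card
          = (𝓗.filter (fun S => N ∈ S)).card := by
      intro 𝓗
      apply Finset.card_image_of_injOn
      intro A hA B hB hAB
      have hA2 : N ∈ A := (Finset.mem_filter.mp (Finset.mem_coe.mp hA)).2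
      have hB2 : N ∈ B := (Finset.mem_filter.mp (Finset.mem_coe.mp hB)).2
      have hAB' : A.erase N = B.erase N := hAB
      have h2 : insert N (A.erase N) = insert N (B.erase N) := by rw [hAB']
      rwa [Finset.insert_erase hA2, Finset.insert_erase hB2] at h2
    have hcardF : F₀.card + F₁.card = 𝓕.card := by
      have h1 := Finset.card_filter_add_card_filter_not (s := 𝓕) (fun S => N ∈ S)
      rw [hF₁def, himgcard 𝓕, ← hFfildef] at *
      rw [hF₀def]
      omega
    have hcardG : G₀.card + G₁.card = 𝓖.card := by
      have h1 := Finset.card_filter_add_card_filter_not (s := 𝓖) (fun S => N ∈ S)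
      rw [hG₁def, himgcard 𝓖, ← hGfildef] at *
      rw [hG₀def]
      omega
    have memF1 : ∀ S ∈ F₁, insert N S ∈ 𝓕 ∧ N ∉ S ∧ S ⊆ Finset.Icc 1 n := by
      intro S hS
      rw [hF₁def, Finset.mem_image] at hS
      obtain ⟨A, hA, rfl⟩ := hS
      rw [hFfildef, Finset.mem_filter] at hA
      refine ⟨?_, Finset.notMem_erase N A, hsubN' (Finset.mem_powerset.mp (hF hA.1))⟩
      rw [Finset.insert_erase hA.2]; exact hA.1
    have memG1 : ∀ S ∈ G₁, insert N S ∈ 𝓖 ∧ N ∉ S ∧ S ⊆ Finset.Icc 1 n := by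
      intro S hS
      rw [hG₁def, Finset.mem_image] at hS
      obtain ⟨A, hA, rfl⟩ := hS
      rw [hGfildef, Finset.mem_filter] at hA
      refine ⟨?_, Finset.notMem_erase N A, hsubN' (Finset.mem_powerset.mp (hG hA.1))⟩
      rw [Finset.insert_erase hA.2]; exact hA.1
    -- apply IH to (F₀, G₀)
    have h00 := ih F₀ G₀
      (by intro S hS
          rw [hF₀def, Finset.mem_filter] at hS
          exact Finset.mem_powerset.mpr (hsubN (Finset.mem_powerset.mp (hF hS.1)) hS.2))
      (by intro S hS
          rw [hG₀def, Finset.mem_filter] at hS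
          exact Finset.mem_powerset.mpr (hsubN (Finset.mem_powerset.mp (hG hS.1)) hS.2))
      (⟨A1, by rw [hF₀def, Finset.mem_filter]; exact ⟨hA1mem, hA1⟩⟩)
      (⟨B1, by rw [hG₀def, Finset.mem_filter]; exact ⟨hB1mem, hB1⟩⟩)
      (by intro Fm hFm Gm hGm
          rw [hF₀def, Finset.mem_filter] at hFm
          rw [hG₀def, Finset.mem_filter] at hGm
          exact hCS Fm hFm.1 Gm hGm.1)
    -- apply IH to (F₁, G₁)
    have h11 := ih F₁ G₁
      (fun S hS => Finset.mem_powerset.mpr (memF1 S hS).2.2)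
      (fun S hS => Finset.mem_powerset.mpr (memG1 S hS).2.2)
      (⟨A2.erase N, by
          rw [hF₁def, Finset.mem_image]
          exact ⟨A2, by rw [hFfildef, Finset.mem_filter]; exact ⟨hA2mem, hA2⟩, rfl⟩⟩)
      (⟨B2.erase N, by
          rw [hG₁def, Finset.mem_image]
          exact ⟨B2, by rw [hGfildef, Finset.mem_filter]; exact ⟨hB2mem, hB2⟩, rfl⟩⟩)
      (by intro Fm hFm Gm hGm
          obtain ⟨hF𝓕, -, -⟩ := memF1 Fm hFm
          obtain ⟨hG𝓖, -, -⟩ := memG1 Gm hGm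
          constructor
          · intro hsub
            exact (hCS _ hF𝓕 _ hG𝓖).1 (Finset.insert_subset_insert N hsub)
          · intro hsub
            exact (hCS _ hF𝓕 _ hG𝓖).2 (Finset.insert_subset_insert N hsub))
    have harith := arithA hn
    rw [← hNdef] at harith
    have hpN : (2:ℕ) ^ N = 2 * 2 ^ n := by rw [hNdef, pow_succ]; ring
    omega


theorem cross_sperner_sum_bound :
    ∃ n₀ : ℕ, ∀ n : ℕ, n₀ ≤ n →
      ∀ 𝓕 𝓖 : Finset (Finset ℕ),
        𝓕 ⊆ (Finset.Icc 1 n).powerset → 𝓖 ⊆ (Finset.Icc 1 n).powerset →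
        𝓕.Nonempty → 𝓖.Nonempty → CrossSperner 𝓕 𝓖 →
        𝓕.card + 𝓖.card ≤ 2 ^ n - 2 ^ ((n + 1) / 2) - 2 ^ (n / 2) + 2 := by
  refine ⟨2, ?_⟩
  intro n hn 𝓕 𝓖 hF hG hFne hGne hCS
  have hQ := mainQ n hn 𝓕 𝓖 hF hG hFne hGne hCS
  have h1 : (n + 1) / 2 ≤ n - 1 := by omega
  have h2 : n / 2 ≤ n - 1 := by omega
  have p1 : (2:ℕ) ^ ((n + 1) / 2) ≤ 2 ^ (n - 1) := Nat.pow_le_pow_right (by norm_num) h1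
  have p2 : (2:ℕ) ^ (n / 2) ≤ 2 ^ (n - 1) := Nat.pow_le_pow_right (by norm_num) h2
  have p3 : (2:ℕ) ^ (n - 1) + 2 ^ (n - 1) = 2 ^ n := by
    have hn1 : n - 1 + 1 = n := by omega
    calc (2:ℕ) ^ (n - 1) + 2 ^ (n - 1) = 2 ^ (n - 1) * 2 := by ring
    _ = 2 ^ (n - 1 + 1) := by rw [pow_succ]
    _ = 2 ^ n := by rw [hn1]
  omega
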